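/- arXiv:2401.14881 — 4 statements merged into one kernel-verified Lean document; each statement's English description precedes it below -/
import Mathlib

section
/- Let n, m, n_i be positive natural numbers with n_i ≤ n and n > m² + m. Then ⌊n_i / ⌊n/m⌋⌋ ≤ ⌊(n_i · m)/n⌋ + 1. -/
theorem aux_floor_nat_div (a b : ℕ) : ⌊(a : ℝ) / (b : ℝ)⌋ = ((a / b : ℕ) : ℤ) := by
  have h0 : (0 : ℝ) ≤ (a : ℝ) / (b : ℝ) := by positivity
  rw [← Int.natCast_floor_eq_floor h0, Nat.floor_div_eq_div]

theorem stmt_3 (n m ni : ℕ) (hn : 0 < n) (hm : 0 < m) (hni1 : 0 < ni)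
    (hni : ni ≤ n) (hbig : m ^ 2 + m < n) :
    ⌊(ni : ℝ) / (⌊(n : ℝ) / m⌋ : ℝ)⌋ ≤ ⌊((ni : ℝ) * m) / n⌋ + 1 := by
  set q : ℕ := n / m with hq
  have h1 : ⌊(n : ℝ) / m⌋ = ((q : ℕ) : ℤ) := aux_floor_nat_div n m
  rw [h1]
  have h2 : ⌊(ni : ℝ) / ((q : ℤ) : ℝ)⌋ = ((ni / q : ℕ) : ℤ) := by
    rw [show (((q : ℤ)) : ℝ) = ((q : ℕ) : ℝ) by push_cast; ring]
    exact aux_floor_nat_div ni q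
  have h3 : ⌊((ni : ℝ) * m) / n⌋ = ((ni * m / n : ℕ) : ℤ) := by
    rw [show ((ni : ℝ) * m) = ((ni * m : ℕ) : ℝ) by push_cast; ring]
    exact aux_floor_nat_div (ni * m) n
  rw [h2, h3]
  -- now reduce to a natural number statement
  have key : ni / q ≤ ni * m / n + 1 := by
    have hmq : m * m ≤ n := by nlinarith
    have hmleq : m ≤ q := (Nat.le_div_iff_mul_le hm).2 hmq
    have hq0 : 0 < q := lt_of_lt_of_le hm hmleq
    have hnlt : n < m * q + m := by
      have h4 : m * q + n % m = n := Nat.div_add_mod n m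
      have h5 : n % m < m := Nat.mod_lt n hm
      omega
    set k : ℕ := ni / q with hk
    have hkq : k * q ≤ ni := Nat.div_mul_le_self ni q
    have hkm : k ≤ m := by
      have hlt : ni < (m + 1) * q := by
        calc ni ≤ n := hni
        _ < m * q + m := hnlt
        _ ≤ m * q + q := by omega
        _ = (m + 1) * q := by ring
      have := (Nat.div_lt_iff_lt_mul hq0).2 (by nlinarith : ni < (m + 1) * q)
      omega
    -- goal: k ≤ ni * m / n + 1
    have hgoal : k * n ≤ ni * m + n := by nlinarith
    have : k ≤ (ni * m + n) / n := (Nat.le_div_iff_mul_le hn).2 hgoal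
    rwa [Nat.add_div_right _ hn] at this
  exact_mod_cast key
end

section
/- Let k ≥ 5 and H = Σ_{i=1}^{k-1} 1/i. For every real n ≥ k²·(H + 2)/(2H), (n·H + 2n − 2n/k) / (2·n·H − 2k) ≤ 1/2 + 1/H. -/
theorem stmt_10 (k : ℕ) (hk : 5 ≤ k) (n : ℝ)
    (hn : n ≥ (k : ℝ) ^ 2 * ((∑ i ∈ Finset.Icc 1 (k - 1), (1 : ℝ) / i) + 2) /
      (2 * (∑ i ∈ Finset.Icc 1 (k - 1), (1 : ℝ) / i))) :
    (n * (∑ i ∈ Finset.Icc 1 (k - 1), (1 : ℝ) / i) + 2 * n - 2 * n / k) /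
        (2 * n * (∑ i ∈ Finset.Icc 1 (k - 1), (1 : ℝ) / i) - 2 * k) ≤
      1 / 2 + 1 / (∑ i ∈ Finset.Icc 1 (k - 1), (1 : ℝ) / i) := by
  set H : ℝ := ∑ i ∈ Finset.Icc 1 (k - 1), (1 : ℝ) / i with hHdef
  have hsub : Finset.Icc 1 4 ⊆ Finset.Icc 1 (k - 1) := by
    apply Finset.Icc_subset_Icc le_rfl
    omega
  have hH : (25 : ℝ) / 12 ≤ H := by
    have := Finset.sum_le_sum_of_subset_of_nonneg hsub
      (fun i _ _ => by positivity : ∀ i ∈ Finset.Icc 1 (k - 1), i ∉ Finset.Icc 1 4 → (0:ℝ) ≤ 1 / i)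
    have h4 : ∑ i ∈ (Finset.Icc 1 4 : Finset ℕ), (1 : ℝ) / i = 25 / 12 := by
      rw [show (Finset.Icc 1 4 : Finset ℕ) = {1, 2, 3, 4} from rfl]
      norm_num
    linarith
  have hk5 : (5 : ℝ) ≤ (k : ℝ) := by exact_mod_cast hk
  have hHpos : 0 < H := by linarith
  have hn' : 2 * n * H ≥ (k : ℝ) ^ 2 * (H + 2) := by
    have := (div_le_iff₀ (by positivity : (0:ℝ) < 2 * H)).mp hn
    nlinarith
  have hD : 0 < 2 * n * H - 2 * k := by nlinarith
  have hkpos : (0:ℝ) < k := by linarith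
  have heq : 1 / 2 + 1 / H = (H + 2) / (2 * H) := by field_simp
  rw [heq, div_le_div_iff₀ hD (by positivity)]
  have key : 2 * n / k * H ≥ (k : ℝ) * (H + 2) := by
    rw [ge_iff_le, ← sub_nonneg]
    have : 2 * n / k * H - (k : ℝ) * (H + 2) = (2 * n * H - k ^ 2 * (H + 2)) / k := by
      field_simp
    rw [this]
    apply div_nonneg _ (le_of_lt hkpos)
    linarith
  nlinarith [key]
end

section
/- Let q₁, …, q_{k-1}, q_k and n be natural numbers with Σ_{i=1}^{k-1} q_i + k·q_k ≤ n, let H = Σ_{i=1}^{k-1} 1/i, let b ≥ 0 and μ ∈ (0, 1/2] be reals, and suppose that for every i ∈ {1, …, k−1}, μ·⌊n/i⌋ − b ≤ q_i/2 + q_k. Then μ ≤ 1/H + (k−1)·(2b+1)/(2·n·H), provided n ≥ 1 and k ≥ 2. -/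
theorem stmt_11 (k n : ℕ) (hk : 2 ≤ k) (hn : 1 ≤ n) (q : ℕ → ℕ)
    (hq : (∑ i ∈ Finset.Icc 1 (k - 1), q i) + k * q k ≤ n)
    (b μ : ℝ) (hb : 0 ≤ b) (hμ0 : 0 < μ) (hμ : μ ≤ 1 / 2)
    (h : ∀ i ∈ Finset.Icc 1 (k - 1),
      μ * ((n / i : ℕ) : ℝ) - b ≤ (q i : ℝ) / 2 + (q k : ℝ)) :
    μ ≤ 1 / (∑ i ∈ Finset.Icc 1 (k - 1), (1 : ℝ) / i) +
      (k - 1 : ℝ) * (2 * b + 1) /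
        (2 * n * (∑ i ∈ Finset.Icc 1 (k - 1), (1 : ℝ) / i)) := by
  set H := ∑ i ∈ Finset.Icc 1 (k - 1), (1 : ℝ) / i with hHdef
  have hk1 : 1 ≤ k - 1 := by omega
  have hHpos : 0 < H := by
    apply Finset.sum_pos
    · intro i hi
      have h1 : 1 ≤ i := (Finset.mem_Icc.mp hi).1
      have : (0:ℝ) < i := by exact_mod_cast h1
      positivity
    · exact ⟨1, Finset.mem_Icc.mpr ⟨le_refl 1, hk1⟩⟩
  have hnpos : (0:ℝ) < n := by exact_mod_cast hn
  have hcard : (Finset.Icc 1 (k - 1)).card = k - 1 := by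
    rw [Nat.card_Icc]; omega
  have hkcast : ((k - 1 : ℕ) : ℝ) = (k : ℝ) - 1 := by
    have : (1:ℕ) ≤ k := by omega
    push_cast [this]
    ring
  -- pointwise bound
  have stepA : ∀ i ∈ Finset.Icc 1 (k - 1),
      μ * (n : ℝ) / i - (μ + b) ≤ (q i : ℝ) / 2 + (q k : ℝ) := by
    intro i hi
    have h1 : 1 ≤ i := (Finset.mem_Icc.mp hi).1
    have hipos : 0 < i := h1
    have hirpos : (0:ℝ) < i := by exact_mod_cast h1
    have hmod : n % i < i := Nat.mod_lt _ hipos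
    have hdm : i * (n / i) + n % i = n := Nat.div_add_mod n i
    have hlt : n < i * (n / i) + i := by
      calc n = i * (n / i) + n % i := hdm.symm
        _ < i * (n / i) + i := by omega
    have hltR : (n : ℝ) < i * ((n / i : ℕ) : ℝ) + i := by exact_mod_cast hlt
    have hdivlt : (n : ℝ) / i < ((n / i : ℕ) : ℝ) + 1 := by
      rw [div_lt_iff₀ hirpos]
      linarith [hltR]
    have hmul : μ * ((n : ℝ) / i) ≤ μ * (((n / i : ℕ) : ℝ) + 1) :=
      mul_le_mul_of_nonneg_left hdivlt.le hμ0.le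
    have := h i hi
    have : μ * ((n : ℝ) / i) - μ - b ≤ (q i : ℝ) / 2 + (q k : ℝ) := by
      nlinarith [hmul, this]
    calc μ * (n : ℝ) / i - (μ + b) = μ * ((n : ℝ) / i) - μ - b := by ring
      _ ≤ (q i : ℝ) / 2 + (q k : ℝ) := this
  have hsum1 : ∑ i ∈ Finset.Icc 1 (k - 1), (μ * (n : ℝ) / i - (μ + b)) ≤
      ∑ i ∈ Finset.Icc 1 (k - 1), ((q i : ℝ) / 2 + (q k : ℝ)) :=
    Finset.sum_le_sum stepA
  have hLHS : ∑ i ∈ Finset.Icc 1 (k - 1), (μ * (n : ℝ) / i - (μ + b)) =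
      μ * n * H - (μ + b) * ((k : ℝ) - 1) := by
    rw [Finset.sum_sub_distrib, Finset.sum_const, hcard, nsmul_eq_mul, hkcast, hHdef,
      Finset.mul_sum]
    congr 1
    · apply Finset.sum_congr rfl
      intro i hi
      field_simp
    · ring
  have hRHS : ∑ i ∈ Finset.Icc 1 (k - 1), ((q i : ℝ) / 2 + (q k : ℝ)) =
      (∑ i ∈ Finset.Icc 1 (k - 1), (q i : ℝ)) / 2 + ((k : ℝ) - 1) * (q k : ℝ) := by
    rw [Finset.sum_add_distrib, Finset.sum_const, hcard, nsmul_eq_mul, hkcast,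
      Finset.sum_div]
  have hqR : (∑ i ∈ Finset.Icc 1 (k - 1), (q i : ℝ)) + (k : ℝ) * (q k : ℝ) ≤ n := by
    have := hq
    push_cast [← Nat.cast_sum] at *
    exact_mod_cast hq
  have hSnn : 0 ≤ ∑ i ∈ Finset.Icc 1 (k - 1), (q i : ℝ) :=
    Finset.sum_nonneg fun i _ => Nat.cast_nonneg _
  have hqknn : (0:ℝ) ≤ q k := Nat.cast_nonneg _
  have key : μ * n * H - (μ + b) * ((k : ℝ) - 1) ≤ n := by
    rw [hLHS, hRHS] at hsum1
    linarith [hsum1, hqR, hSnn, hqknn]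
  have hkR : (1:ℝ) ≤ (k : ℝ) - 1 := by
    have : (2:ℝ) ≤ k := by exact_mod_cast hk
    linarith
  have hmain : μ * (n * H) ≤ (1 / H + ((k : ℝ) - 1) * (2 * b + 1) / (2 * n * H)) * (n * H) := by
    have expand : (1 / H + ((k : ℝ) - 1) * (2 * b + 1) / (2 * n * H)) * (n * H) =
        (n : ℝ) + ((k : ℝ) - 1) * (2 * b + 1) / 2 := by
      field_simp
    rw [expand]
    nlinarith [key, hkR, mul_le_mul_of_nonneg_right hμ (by linarith : (0:ℝ) ≤ (k:ℝ) - 1)]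
  exact le_of_mul_le_mul_right hmain (by positivity)
end

section
/- Let j, g, ℓ, x be natural numbers with ℓ ≥ 1 and j ≤ ℓ, and let n_i, n be natural numbers with n_i ≥ g·x. If m = ⌊n_i/ℓ⌋ then j·m ≥ ⌊(j·g)/ℓ⌋·x − j, where the floors denote natural division interpreted in the integers. -/
theorem stmt_16 (j g ℓ x ni n m : ℕ) (hℓ : 1 ≤ ℓ) (hj : j ≤ ℓ)
    (hni : g * x ≤ ni) (hm : m = ni / ℓ) :
    ((j * g / ℓ : ℕ) : ℤ) * x - j ≤ (j : ℤ) * m := by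
  subst hm
  have h1 : (j * g / ℓ) * x ≤ j * (ni / ℓ) + j := by
    apply Nat.le_of_mul_le_mul_right _ hℓ
    have hd : j * g / ℓ * ℓ ≤ j * g := Nat.div_mul_le_self _ _
    calc (j * g / ℓ) * x * ℓ = (j * g / ℓ * ℓ) * x := by ring
      _ ≤ j * g * x := Nat.mul_le_mul_right _ hd
      _ = j * (g * x) := by ring
      _ ≤ j * ni := Nat.mul_le_mul_left _ hni
      _ ≤ j * (ℓ * (ni / ℓ) + ℓ) := Nat.mul_le_mul_left _
          (by have h := Nat.div_add_mod ni ℓ; have h2 := Nat.mod_lt ni hℓ; omega)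
      _ = (j * (ni / ℓ) + j) * ℓ := by ring
  have h2 : ((j * g / ℓ : ℕ) : ℤ) * x ≤ (j : ℤ) * ((ni / ℓ : ℕ) : ℤ) + j := by
    exact_mod_cast h1
  linarith
end
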